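/- arXiv:1402.4628 — 4 statements merged into one kernel-verified Lean document; each statement's English description precedes it below -/
import Mathlib

section
/- For every ε > 0 and T > 0 there exist constants c_0 ∈ (0,1) and p_0 > 0 such that for every real random variable ξ with mean 0, variance 1 and E|ξ|^{2+ε} ≤ T, there exists a real number c with c_0 ≤ c ≤ c_0^{−1} such that P( c < |ξ − ξ'| < 2c ) ≥ p_0, where ξ' is an independent copy of ξ. -/
open MeasureTheory ProbabilityTheory Real

lemma aux_comp_fst {ν : Measure ℝ} [IsProbabilityMeasure ν] {f : ℝ → ℝ}
    (hf : Integrable f ν) : Integrable (fun p : ℝ × ℝ => f p.1) (ν.prod ν) := by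
  simpa using hf.mul_prod (integrable_const (1 : ℝ))

lemma aux_comp_snd {ν : Measure ℝ} [IsProbabilityMeasure ν] {f : ℝ → ℝ}
    (hf : Integrable f ν) : Integrable (fun p : ℝ × ℝ => f p.2) (ν.prod ν) := by
  simpa using (integrable_const (1 : ℝ)).mul_prod hf

lemma aux_int_fst {ν : Measure ℝ} [IsProbabilityMeasure ν] (f : ℝ → ℝ) :
    ∫ p : ℝ × ℝ, f p.1 ∂(ν.prod ν) = ∫ x, f x ∂ν := by
  simpa using integral_prod_mul (μ := ν) (ν := ν) f (fun _ => (1 : ℝ))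

lemma aux_int_snd {ν : Measure ℝ} [IsProbabilityMeasure ν] (f : ℝ → ℝ) :
    ∫ p : ℝ × ℝ, f p.2 ∂(ν.prod ν) = ∫ x, f x ∂ν := by
  simpa using integral_prod_mul (μ := ν) (ν := ν) (fun _ => (1 : ℝ)) f

lemma aux_key (ε : ℝ) (hε : 0 < ε) (x y : ℝ) :
    |x - y| ^ (2 + ε) ≤ 2 ^ ((2 : ℝ) + ε) * (|x| ^ (2 + ε) + |y| ^ (2 + ε)) := by
  have h2 : (0:ℝ) ≤ 2 + ε := by linarith
  have h1 : |x - y| ≤ 2 * max |x| |y| := by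
    rcases le_total |x| |y| with h | h
    · rw [max_eq_right h]; linarith [abs_sub x y]
    · rw [max_eq_left h]; linarith [abs_sub x y]
  have hmax : (0:ℝ) ≤ max |x| |y| := le_max_of_le_left (abs_nonneg x)
  have hb : |x - y| ^ (2 + ε) ≤ (2 * max |x| |y|) ^ (2 + ε) :=
    Real.rpow_le_rpow (abs_nonneg _) h1 h2
  rw [Real.mul_rpow (by norm_num) hmax] at hb
  refine hb.trans ?_
  have hm : (max |x| |y|) ^ (2 + ε) ≤ |x| ^ (2 + ε) + |y| ^ (2 + ε) := by
    rcases le_total |x| |y| with h | h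
    · rw [max_eq_right h]
      have := Real.rpow_nonneg (abs_nonneg x) (2 + ε); linarith
    · rw [max_eq_left h]
      have := Real.rpow_nonneg (abs_nonneg y) (2 + ε); linarith
  have h2p : (0:ℝ) ≤ 2 ^ ((2:ℝ) + ε) := Real.rpow_nonneg (by norm_num) _
  exact mul_le_mul_of_nonneg_left hm h2p

set_option maxHeartbeats 1000000 in
/-- There exist `c₀ ∈ (0,1)` and `p₀ > 0`, depending only on `ε` and `T`, such that any
`ξ` with mean 0, variance 1 and `(2+ε)`-moment at most `T` admits `c ∈ [c₀, c₀⁻¹]` with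
`P(c < |ξ - ξ'| < 2c) ≥ p₀`, where `ξ'` is an independent copy of `ξ`. -/
theorem anticoncentration_of_difference
    (ε : ℝ) (hε : 0 < ε) (T : ℝ) (hT : 0 < T) :
    ∃ c₀ p₀ : ℝ, 0 < c₀ ∧ c₀ < 1 ∧ 0 < p₀ ∧
      ∀ (ν : Measure ℝ), IsProbabilityMeasure ν →
        (∫ x, x ∂ν) = 0 → (∫ x, x ^ 2 ∂ν) = 1 →
        Integrable (fun x => |x| ^ (2 + ε)) ν → (∫ x, |x| ^ (2 + ε) ∂ν) ≤ T →
        ∃ c : ℝ, c₀ ≤ c ∧ c ≤ c₀⁻¹ ∧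
          p₀ ≤ ((ν.prod ν) {p : ℝ × ℝ | c < |p.1 - p.2| ∧ |p.1 - p.2| < 2 * c}).toReal := by
  classical
  set M : ℝ := 2 ^ ((2 : ℝ) + ε) * (2 * T) with hMdef
  have h2e : (0:ℝ) < 2 ^ ((2:ℝ) + ε) := Real.rpow_pos_of_pos (by norm_num) _
  have hM0 : 0 < M := by positivity
  set b : ℝ := max 2 ((4 * M) ^ ε⁻¹) with hbdef
  have hb2 : (2:ℝ) ≤ b := le_max_left _ _
  have hb0 : (0:ℝ) < b := lt_of_lt_of_le (by norm_num) hb2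
  have hbM : 4 * M ≤ b ^ ε := by
    calc 4 * M = ((4 * M) ^ ε⁻¹) ^ ε := (Real.rpow_inv_rpow (by positivity) hε.ne').symm
      _ ≤ b ^ ε := Real.rpow_le_rpow (by positivity) (le_max_right _ _) hε.le
  obtain ⟨N, hN⟩ := pow_unbounded_of_one_lt b (by norm_num : (1:ℝ) < 3/2)
  set ck : ℕ → ℝ := fun k => (1/2) * (3/2) ^ k with hckdef
  have hck_half : ∀ k, (1:ℝ)/2 ≤ ck k := by
    intro k
    have : (1:ℝ) ≤ (3/2) ^ k := one_le_pow₀ (by norm_num : (1:ℝ) ≤ 3/2)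
    simp only [hckdef]; linarith
  have hck_pos : ∀ k, (0:ℝ) < ck k := fun k => lt_of_lt_of_le (by norm_num) (hck_half k)
  have hck_mono : ∀ k, k ≤ N → ck k ≤ ck N := by
    intro k hk
    have : ((3:ℝ)/2) ^ k ≤ (3/2) ^ N := pow_le_pow_right₀ (by norm_num) hk
    simp only [hckdef]; linarith
  have hckN : b ≤ 2 * ck N := by
    simp only [hckdef]; linarith [hN]
  refine ⟨(2 * ck N + 2)⁻¹, 3 / (2 * b ^ 2 * ((N : ℝ) + 1)), by positivity, ?_, by positivity, ?_⟩
  · have h1 : (1:ℝ) < 2 * ck N + 2 := by linarith [hck_half N]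
    exact inv_lt_one_of_one_lt₀ h1
  intro ν hprob hmean hvar hint hmom
  set μ : Measure (ℝ × ℝ) := ν.prod ν with hμdef
  haveI : IsProbabilityMeasure μ := by rw [hμdef]; infer_instance
  -- integrability on ν
  have hx2 : Integrable (fun x : ℝ => x ^ 2) ν := by
    refine ((integrable_const (1:ℝ)).add hint).mono' ?_ (Filter.Eventually.of_forall fun x => ?_)
    · exact (continuous_pow 2).aestronglyMeasurable
    · simp only [Pi.add_apply]
      rw [Real.norm_eq_abs, abs_pow, ← sq_abs]
      rcases le_total |x| 1 with h | h
      · have h1 : |x| ^ 2 ≤ 1 := by nlinarith [abs_nonneg x]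
        have h2 := Real.rpow_nonneg (abs_nonneg x) (2 + ε)
        rw [abs_abs]; nlinarith
      · have h1 : |x| ^ (2:ℕ) = |x| ^ ((2:ℕ):ℝ) := (Real.rpow_natCast _ 2).symm
        have h2 : |x| ^ ((2:ℕ):ℝ) ≤ |x| ^ (2 + ε) := by
          apply Real.rpow_le_rpow_of_exponent_le h
          push_cast; linarith
        rw [abs_abs]
        calc |x| ^ (2:ℕ) ≤ |x| ^ (2 + ε) := by rw [h1]; exact h2
          _ ≤ 1 + |x| ^ (2 + ε) := by linarith
  have hx1 : Integrable (fun x : ℝ => x) ν := by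
    refine ((integrable_const (1:ℝ)).add hx2).mono' ?_ (Filter.Eventually.of_forall fun x => ?_)
    · exact continuous_id.aestronglyMeasurable
    · simp only [Pi.add_apply]
      rw [Real.norm_eq_abs]
      nlinarith [sq_nonneg (|x| - 1), sq_abs x]
  -- integrability on μ
  have hfst2 : Integrable (fun p : ℝ × ℝ => p.1 ^ 2) μ := aux_comp_fst hx2
  have hsnd2 : Integrable (fun p : ℝ × ℝ => p.2 ^ 2) μ := aux_comp_snd hx2
  have hmul : Integrable (fun p : ℝ × ℝ => p.1 * p.2) μ := hx1.mul_prod hx1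
  have hg : Integrable (fun p : ℝ × ℝ => (p.1 - p.2) ^ 2) μ := by
    have e : (fun p : ℝ × ℝ => (p.1 - p.2) ^ 2)
        = fun p : ℝ × ℝ => p.1 ^ 2 + p.2 ^ 2 - 2 * (p.1 * p.2) := by
      funext p; ring
    rw [e]; exact (hfst2.add hsnd2).sub (hmul.const_mul 2)
  have hgint : ∫ p, (p.1 - p.2) ^ 2 ∂μ = 2 := by
    have e : (fun p : ℝ × ℝ => (p.1 - p.2) ^ 2)
        = fun p : ℝ × ℝ => p.1 ^ 2 + p.2 ^ 2 - 2 * (p.1 * p.2) := by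
      funext p; ring
    have h1 : ∫ p : ℝ × ℝ, p.1 ^ 2 ∂μ = 1 := by
      rw [hμdef, aux_int_fst (fun x : ℝ => x ^ 2), hvar]
    have h2 : ∫ p : ℝ × ℝ, p.2 ^ 2 ∂μ = 1 := by
      rw [hμdef, aux_int_snd (fun x : ℝ => x ^ 2), hvar]
    have h3 : ∫ p : ℝ × ℝ, p.1 * p.2 ∂μ = 0 := by
      rw [hμdef, integral_prod_mul (fun x : ℝ => x) (fun x : ℝ => x), hmean]; ring
    have hadd : Integrable (fun p : ℝ × ℝ => p.1 ^ 2 + p.2 ^ 2) μ := hfst2.add hsnd2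
    have hcm : Integrable (fun p : ℝ × ℝ => 2 * (p.1 * p.2)) μ := hmul.const_mul 2
    rw [e, integral_sub hadd hcm, integral_add hfst2 hsnd2, integral_const_mul, h1, h2, h3]
    ring
  -- (2+ε) moment on μ
  have hint1 : Integrable (fun p : ℝ × ℝ => |p.1| ^ (2 + ε)) μ := aux_comp_fst hint
  have hint2 : Integrable (fun p : ℝ × ℝ => |p.2| ^ (2 + ε)) μ := aux_comp_snd hint
  have hDI : Integrable (fun p : ℝ × ℝ => |p.1 - p.2| ^ (2 + ε)) μ := by
    have hdom : Integrable (fun p : ℝ × ℝ =>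
        2 ^ ((2:ℝ) + ε) * (|p.1| ^ (2 + ε) + |p.2| ^ (2 + ε))) μ := (hint1.add hint2).const_mul _
    refine hdom.mono' ?_ (Filter.Eventually.of_forall fun p => ?_)
    · exact ((continuous_fst.sub continuous_snd).abs.rpow_const
        (fun p => Or.inr (by linarith))).aestronglyMeasurable
    · rw [Real.norm_eq_abs, abs_of_nonneg (Real.rpow_nonneg (abs_nonneg _) _)]
      exact aux_key ε hε p.1 p.2
  have hDbound : ∫ p, |p.1 - p.2| ^ (2 + ε) ∂μ ≤ M := by
    have hdom : Integrable (fun p : ℝ × ℝ =>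
        2 ^ ((2:ℝ) + ε) * (|p.1| ^ (2 + ε) + |p.2| ^ (2 + ε))) μ := (hint1.add hint2).const_mul _
    have step : ∫ p, |p.1 - p.2| ^ (2 + ε) ∂μ
        ≤ ∫ p : ℝ × ℝ, 2 ^ ((2:ℝ) + ε) * (|p.1| ^ (2 + ε) + |p.2| ^ (2 + ε)) ∂μ :=
      integral_mono hDI hdom (fun p => aux_key ε hε p.1 p.2)
    refine step.trans ?_
    rw [integral_const_mul, integral_add hint1 hint2, hμdef,
      aux_int_fst (fun x : ℝ => |x| ^ (2 + ε)), aux_int_snd (fun x : ℝ => |x| ^ (2 + ε)), hMdef]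
    have hnn : 0 ≤ ∫ x, |x| ^ (2 + ε) ∂ν :=
      integral_nonneg fun x => Real.rpow_nonneg (abs_nonneg _) _
    nlinarith
  -- set splitting
  have hDmeas : Measurable (fun p : ℝ × ℝ => |p.1 - p.2|) := (measurable_fst.sub measurable_snd).abs
  set A : Set (ℝ × ℝ) := {p | |p.1 - p.2| ≤ 1/2} with hAdef
  set B : Set (ℝ × ℝ) := {p | 1/2 < |p.1 - p.2| ∧ |p.1 - p.2| < b} with hBdef
  set C : Set (ℝ × ℝ) := {p | b ≤ |p.1 - p.2|} with hCdef
  have hA : MeasurableSet A := measurableSet_le hDmeas measurable_const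
  have hBm : MeasurableSet B :=
    (measurableSet_lt measurable_const hDmeas).inter (measurableSet_lt hDmeas measurable_const)
  have hC : MeasurableSet C := measurableSet_le measurable_const hDmeas
  have hunion : A ∪ (B ∪ C) = Set.univ := by
    ext p
    simp only [hAdef, hBdef, hCdef, Set.mem_union, Set.mem_setOf_eq, Set.mem_univ, iff_true]
    by_cases h1 : |p.1 - p.2| ≤ 1/2
    · exact Or.inl h1
    · by_cases h2 : |p.1 - p.2| < b
      · exact Or.inr (Or.inl ⟨lt_of_not_ge h1, h2⟩)
      · exact Or.inr (Or.inr (le_of_not_gt h2))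
  have hd1 : Disjoint A (B ∪ C) := by
    rw [Set.disjoint_left]
    rintro p hp (hq | hq)
    · simp only [hAdef, Set.mem_setOf_eq] at hp
      simp only [hBdef, Set.mem_setOf_eq] at hq
      linarith [hq.1]
    · simp only [hAdef, Set.mem_setOf_eq] at hp
      simp only [hCdef, Set.mem_setOf_eq] at hq
      linarith
  have hd2 : Disjoint B C := by
    rw [Set.disjoint_left]
    rintro p hp hq
    simp only [hBdef, Set.mem_setOf_eq] at hp
    simp only [hCdef, Set.mem_setOf_eq] at hq
    linarith [hp.2]
  have hsplit : (2:ℝ) = ∫ p in A, (p.1-p.2)^2 ∂μ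
      + (∫ p in B, (p.1-p.2)^2 ∂μ + ∫ p in C, (p.1-p.2)^2 ∂μ) := by
    rw [← hgint, ← setIntegral_univ, ← hunion,
      setIntegral_union hd1 (hBm.union hC) hg.integrableOn hg.integrableOn,
      setIntegral_union hd2 hC hg.integrableOn hg.integrableOn]
  have htoReal_le_one : ∀ s : Set (ℝ × ℝ), (μ s).toReal ≤ 1 := fun s => by
    simpa using ENNReal.toReal_mono ENNReal.one_ne_top prob_le_one
  have hAb : ∫ p in A, (p.1-p.2)^2 ∂μ ≤ 1/4 := by
    have h1 : ∫ p in A, (p.1-p.2)^2 ∂μ ≤ ∫ _ in A, (1/4 : ℝ) ∂μ := by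
      refine setIntegral_mono_on hg.integrableOn
        (integrableOn_const (measure_ne_top μ A)) hA fun p hp => ?_
      simp only [hAdef, Set.mem_setOf_eq] at hp
      nlinarith [abs_nonneg (p.1 - p.2), sq_abs (p.1 - p.2)]
    rw [setIntegral_const, smul_eq_mul, measureReal_def] at h1
    nlinarith [htoReal_le_one A, ENNReal.toReal_nonneg (a := μ A)]
  have hbε : (0:ℝ) < b ^ ε := Real.rpow_pos_of_pos hb0 _
  have hCb : ∫ p in C, (p.1-p.2)^2 ∂μ ≤ 1/4 := by
    have h1 : ∫ p in C, (p.1-p.2)^2 ∂μ ≤ ∫ p in C, (b ^ ε)⁻¹ * |p.1-p.2| ^ (2+ε) ∂μ := by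
      refine setIntegral_mono_on hg.integrableOn
        (hDI.const_mul _).integrableOn hC fun p hp => ?_
      simp only [hCdef, Set.mem_setOf_eq] at hp
      set d := |p.1 - p.2| with hd
      have hd0 : 0 < d := lt_of_lt_of_le hb0 hp
      have e1 : d ^ ((2:ℝ) + ε) = d ^ (2:ℕ) * d ^ ε := by
        rw [Real.rpow_add hd0]
        norm_num [Real.rpow_natCast]
      have e2 : d ^ (2:ℕ) * b ^ ε ≤ d ^ (2:ℕ) * d ^ ε := by
        have h5 : b ^ ε ≤ d ^ ε := Real.rpow_le_rpow hb0.le hp hε.le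
        exact mul_le_mul_of_nonneg_left h5 (sq_nonneg d)
      have e3 : d ^ (2:ℕ) * b ^ ε ≤ d ^ ((2:ℝ)+ε) := by rw [e1]; exact e2
      have hgd : (p.1 - p.2)^2 = d ^ (2:ℕ) := (sq_abs _).symm
      have h3 : d ^ (2:ℕ) ≤ d ^ ((2:ℝ)+ε) / b ^ ε := (le_div_iff₀ hbε).2 e3
      rw [div_eq_inv_mul] at h3
      rw [hgd]
      exact h3
    have h2 : ∫ p in C, (b^ε)⁻¹ * |p.1-p.2|^(2+ε) ∂μ ≤ (b^ε)⁻¹ * M := by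
      rw [integral_const_mul]
      have h3 : ∫ p in C, |p.1-p.2|^(2+ε) ∂μ ≤ ∫ p, |p.1-p.2|^(2+ε) ∂μ :=
        setIntegral_le_integral hDI
          (Filter.Eventually.of_forall fun p => Real.rpow_nonneg (abs_nonneg _) _)
      exact mul_le_mul_of_nonneg_left (h3.trans hDbound) (by positivity)
    have h5 : (b^ε)⁻¹ * M ≤ 1/4 := by
      rw [inv_mul_le_iff₀ hbε]
      linarith
    linarith
  have hBlow : (3:ℝ)/2 ≤ ∫ p in B, (p.1-p.2)^2 ∂μ := by linarith
  have hBup : ∫ p in B, (p.1-p.2)^2 ∂μ ≤ b^2 * (μ B).toReal := by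
    have h1 : ∫ p in B, (p.1-p.2)^2 ∂μ ≤ ∫ _ in B, (b^2 : ℝ) ∂μ := by
      refine setIntegral_mono_on hg.integrableOn
        (integrableOn_const (measure_ne_top μ B)) hBm fun p hp => ?_
      simp only [hBdef, Set.mem_setOf_eq] at hp
      nlinarith [abs_nonneg (p.1-p.2), sq_abs (p.1-p.2), hp.1, hp.2]
    rw [setIntegral_const, smul_eq_mul, measureReal_def] at h1
    linarith [h1, mul_comm ((μ B).toReal) (b^2)]
  have hμB : 3 / (2 * b^2) ≤ (μ B).toReal := by
    rw [div_le_iff₀ (by positivity)]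
    nlinarith
  -- dyadic cover
  set S : ℕ → Set (ℝ × ℝ) := fun k => {p | ck k < |p.1 - p.2| ∧ |p.1 - p.2| < 2 * ck k} with hSdef
  have hcover : B ⊆ ⋃ k ∈ Finset.range (N+1), S k := by
    intro p hp
    simp only [hBdef, Set.mem_setOf_eq] at hp
    obtain ⟨h1, h2⟩ := hp
    have hP0 : ck 0 < |p.1 - p.2| := by
      simp only [hckdef]; norm_num; linarith
    set k0 := Nat.findGreatest (fun k => ck k < |p.1 - p.2|) N with hk0def
    have hk0N : k0 ≤ N := Nat.findGreatest_le N
    have hPk : ck k0 < |p.1 - p.2| := Nat.findGreatest_spec (P := fun k => ck k < |p.1 - p.2|) (Nat.zero_le N) hP0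
    have hup : |p.1 - p.2| < 2 * ck k0 := by
      rcases eq_or_lt_of_le hk0N with heq | hlt
      · rw [heq]; linarith [hckN]
      · have hnP : ¬ (ck (k0 + 1) < |p.1 - p.2|) :=
          Nat.findGreatest_is_greatest (Nat.lt_succ_self k0) hlt
        have h3 : |p.1 - p.2| ≤ ck (k0+1) := le_of_not_gt hnP
        have h4 : ck (k0+1) = (3/2) * ck k0 := by
          simp only [hckdef]; rw [pow_succ]; ring
        rw [h4] at h3
        linarith [hck_pos k0]
    simp only [Set.mem_iUnion, hSdef, Set.mem_setOf_eq, exists_prop]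
    exact ⟨k0, Finset.mem_range.2 (Nat.lt_succ_of_le hk0N), hPk, hup⟩
  have hSmeas : ∀ k, MeasurableSet (S k) := fun k =>
    (measurableSet_lt measurable_const hDmeas).inter (measurableSet_lt hDmeas measurable_const)
  have hsum : (μ B).toReal ≤ ∑ k ∈ Finset.range (N+1), (μ (S k)).toReal := by
    have h1 : μ B ≤ ∑ k ∈ Finset.range (N+1), μ (S k) :=
      (measure_mono hcover).trans (measure_biUnion_finset_le _ _)
    have h2 : (∑ k ∈ Finset.range (N+1), μ (S k)) ≠ ⊤ := by
      refine (ENNReal.sum_lt_top.2 fun k _ => ?_).ne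
      exact measure_lt_top μ _
    calc (μ B).toReal ≤ (∑ k ∈ Finset.range (N+1), μ (S k)).toReal :=
          ENNReal.toReal_mono h2 h1
      _ = ∑ k ∈ Finset.range (N+1), (μ (S k)).toReal :=
          ENNReal.toReal_sum fun k _ => measure_ne_top μ _
  have hpig : ∃ k ∈ Finset.range (N+1), 3 / (2 * b^2 * ((N:ℝ)+1)) ≤ (μ (S k)).toReal := by
    by_contra hcon
    push_neg at hcon
    have h1 : ∑ k ∈ Finset.range (N+1), (μ (S k)).toReal
        < ∑ _k ∈ Finset.range (N+1), 3 / (2 * b^2 * ((N:ℝ)+1)) :=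
      Finset.sum_lt_sum_of_nonempty ⟨0, Finset.mem_range.2 (Nat.succ_pos N)⟩ fun k hk => hcon k hk
    rw [Finset.sum_const, Finset.card_range, nsmul_eq_mul] at h1
    have hb2' : (0:ℝ) < b^2 := by positivity
    have heq : ((N:ℝ)+1) * (3 / (2*b^2*((N:ℝ)+1))) = 3/(2*b^2) := by
      field_simp
    push_cast at h1
    rw [heq] at h1
    linarith
  obtain ⟨k, hk, hkp⟩ := hpig
  refine ⟨ck k, ?_, ?_, ?_⟩
  · have h3 : (2:ℝ) ≤ 2 * ck N + 2 := by linarith [hck_pos N]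
    have h4 : (2*ck N+2)⁻¹ ≤ 1/2 := by
      rw [← one_div]
      exact one_div_le_one_div_of_le (by norm_num) h3
    linarith [hck_half k]
  · rw [inv_inv]
    have := hck_mono k (Nat.lt_succ_iff.1 (Finset.mem_range.1 hk))
    linarith
  · exact hkp
end

section
/- Let y ∈ (0,1) and let l, k be positive integers with y^l < 1/2. Then the set { ∑_{i=1}^{k} ε_i y^{i(l+2)} : ε_i ∈ {−1, 1} } is 2 y^{k(l+2)}-separated; that is, for any two distinct sign sequences (ε_1, …, ε_k), (ε'_1, …, ε'_k) ∈ {−1,1}^k, one has | ∑_{i=1}^{k} ε_i y^{i(l+2)} − ∑_{i=1}^{k} ε'_i y^{i(l+2)} | ≥ 2 y^{k(l+2)}. -/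
lemma key_tail (y : ℝ) (hy0 : 0 ≤ y) (m : ℕ) (hm : y ^ m ≤ 1 / 2) :
    ∀ d j : ℕ, y ^ ((j + d) * m) + ∑ i ∈ Finset.Icc (j + 1) (j + d), y ^ (i * m)
      ≤ y ^ (j * m) := by
  intro d
  induction d with
  | zero => intro j; simp
  | succ d ih =>
    intro j
    have hsplit : ∑ i ∈ Finset.Icc (j + 1) (j + d + 1), y ^ (i * m)
        = ∑ i ∈ Finset.Icc (j + 1) (j + d), y ^ (i * m) + y ^ ((j + d + 1) * m) := by
      rw [Finset.sum_Icc_succ_top (by omega)]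
    have h1 := ih j
    have h2 : y ^ ((j + d + 1) * m) ≤ (1/2) * y ^ ((j + d) * m) := by
      have : y ^ ((j + d + 1) * m) = y ^ m * y ^ ((j + d) * m) := by
        rw [← pow_add]; ring_nf
      rw [this]
      exact mul_le_mul_of_nonneg_right hm (pow_nonneg hy0 _)
    have h3 : (0:ℝ) ≤ y ^ ((j+d)*m) := pow_nonneg hy0 _
    calc y ^ ((j + (d+1)) * m) + ∑ i ∈ Finset.Icc (j + 1) (j + (d+1)), y ^ (i * m)
        = y ^ ((j + d + 1) * m) + (∑ i ∈ Finset.Icc (j + 1) (j + d), y ^ (i * m)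
            + y ^ ((j + d + 1) * m)) := by rw [show j + (d+1) = j + d + 1 by ring, hsplit]
      _ ≤ (1/2) * y ^ ((j+d)*m) + (∑ i ∈ Finset.Icc (j + 1) (j + d), y ^ (i * m)
            + (1/2) * y ^ ((j+d)*m)) := by linarith
      _ = y ^ ((j + d) * m) + ∑ i ∈ Finset.Icc (j + 1) (j + d), y ^ (i * m) := by ring
      _ ≤ y ^ (j * m) := h1

/-- Separation of signed sums of the lacunary sequence `y^{i(l+2)}`: if `0 < y < 1` and
`y^l < 1/2`, then any two sums `∑_{i=1}^k ε_i y^{i(l+2)}` with distinct sign sequences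
`ε_i ∈ {-1, 1}` differ by at least `2 y^{k(l+2)}`. -/
theorem signed_lacunary_sums_separated
    (y : ℝ) (hy0 : 0 < y) (hy1 : y < 1)
    (l k : ℕ) (hl : 0 < l) (hk : 0 < k) (hyl : y ^ l < 1 / 2)
    (e e' : ℕ → ℝ)
    (he : ∀ i ∈ Finset.Icc 1 k, e i = -1 ∨ e i = 1)
    (he' : ∀ i ∈ Finset.Icc 1 k, e' i = -1 ∨ e' i = 1)
    (hne : ∃ i ∈ Finset.Icc 1 k, e i ≠ e' i) :
    2 * y ^ (k * (l + 2)) ≤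
      |(∑ i ∈ Finset.Icc 1 k, e i * y ^ (i * (l + 2)))
        - ∑ i ∈ Finset.Icc 1 k, e' i * y ^ (i * (l + 2))| := by
  set m := l + 2 with hm_def
  have hym : y ^ m ≤ 1 / 2 :=
    le_of_lt (lt_of_le_of_lt (pow_le_pow_of_le_one hy0.le hy1.le (by omega)) hyl)
  -- the least index where e and e' differ
  classical
  set S := (Finset.Icc 1 k).filter (fun i => e i ≠ e' i) with hS
  have hSne : S.Nonempty := by
    obtain ⟨i, hi, hine⟩ := hne
    exact ⟨i, Finset.mem_filter.mpr ⟨hi, hine⟩⟩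
  set j := S.min' hSne with hj_def
  have hjS : j ∈ S := S.min'_mem hSne
  obtain ⟨hjIcc, hjne⟩ := Finset.mem_filter.mp hjS
  obtain ⟨hj1, hjk⟩ := Finset.mem_Icc.mp hjIcc
  have hmin : ∀ i ∈ Finset.Icc 1 k, i < j → e i = e' i := by
    intro i hi hilt
    by_contra hne'
    exact absurd (S.min'_le i (Finset.mem_filter.mpr ⟨hi, hne'⟩)) (by omega)
  -- rewrite the difference as a single sum
  have hD : (∑ i ∈ Finset.Icc 1 k, e i * y ^ (i * m))
        - ∑ i ∈ Finset.Icc 1 k, e' i * y ^ (i * m)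
      = ∑ i ∈ Finset.Icc 1 k, (e i - e' i) * y ^ (i * m) := by
    rw [← Finset.sum_sub_distrib]
    exact Finset.sum_congr rfl fun i _ => by ring
  -- restrict to Icc j k
  have hrestrict : ∑ i ∈ Finset.Icc j k, (e i - e' i) * y ^ (i * m)
      = ∑ i ∈ Finset.Icc 1 k, (e i - e' i) * y ^ (i * m) := by
    apply Finset.sum_subset (Finset.Icc_subset_Icc hj1 le_rfl)
    intro x hx hxn
    have hx' := Finset.mem_Icc.mp hx
    have hxlt : x < j := by
      by_contra h
      exact hxn (Finset.mem_Icc.mpr ⟨by omega, hx'.2⟩)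
    rw [hmin x hx hxlt]; ring
  -- split off the term at j
  have hsplit : ∑ i ∈ Finset.Icc j k, (e i - e' i) * y ^ (i * m)
      = (e j - e' j) * y ^ (j * m)
        + ∑ i ∈ Finset.Icc (j + 1) k, (e i - e' i) * y ^ (i * m) := by
    rw [← Finset.Ioc_insert_left hjk, Finset.sum_insert Finset.left_notMem_Ioc,
      Finset.Icc_add_one_left_eq_Ioc]
  have habsj : |e j - e' j| = 2 := by
    rcases he j hjIcc with h1 | h1 <;> rcases he' j hjIcc with h2 | h2 <;>
      rw [h1, h2] at hjne ⊢ <;> first | (exact absurd rfl hjne) | norm_num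
  -- bound the tail
  have htail : |∑ i ∈ Finset.Icc (j + 1) k, (e i - e' i) * y ^ (i * m)|
      ≤ 2 * ∑ i ∈ Finset.Icc (j + 1) k, y ^ (i * m) := by
    refine le_trans (Finset.abs_sum_le_sum_abs _ _) ?_
    rw [Finset.mul_sum]
    apply Finset.sum_le_sum
    intro i hi
    have hi' := Finset.mem_Icc.mp hi
    have hiIcc : i ∈ Finset.Icc 1 k := Finset.mem_Icc.mpr ⟨by omega, hi'.2⟩
    rw [abs_mul, abs_pow, abs_of_nonneg hy0.le]
    apply mul_le_mul_of_nonneg_right _ (pow_nonneg hy0.le _)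
    rcases he i hiIcc with h1 | h1 <;> rcases he' i hiIcc with h2 | h2 <;>
      rw [h1, h2] <;> norm_num
  have hkey := key_tail y hy0.le m hym (k - j) j
  rw [show j + (k - j) = k by omega] at hkey
  -- put it together
  rw [hD, ← hrestrict, hsplit]
  have h1 : |(e j - e' j) * y ^ (j * m)| = 2 * y ^ (j * m) := by
    rw [abs_mul, habsj, abs_pow, abs_of_nonneg hy0.le]
  set a := (e j - e' j) * y ^ (j * m)
  set b := ∑ i ∈ Finset.Icc (j + 1) k, (e i - e' i) * y ^ (i * m)
  have h2 : |a| ≤ |a + b| + |b| := by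
    have hab : a = (a + b) - b := by ring
    calc |a| = |(a + b) - b| := by rw [← hab]
      _ ≤ |a + b| + |b| := abs_sub _ _
  rw [h1] at h2
  linarith
end

section
/- Let F : ℝ → ℝ be twice continuously differentiable and G : ℝ → ℝ be continuous. Let x_0 ∈ ℝ, ε_1 > 0, M > 0, and set I := [x_0 − ε_1 M^{−1}, x_0 + ε_1 M^{−1}]. Assume: (i) F(x_0) = 0 and |F'(x_0)| ≥ ε_1; (ii) |F''(x)| ≤ M for all x ∈ I; (iii) sup_{x ∈ I} |F(x) − G(x)| ≤ (1/4) ε_1² M^{−1}. Then G has a root in I, i.e., there exists x ∈ I with G(x) = 0. -/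
open Set

lemma taylor1_right (f : ℝ → ℝ) (hf : ContDiff ℝ 2 f) {x₀ x M : ℝ} (hx : x₀ < x)
    (hM : ∀ t ∈ Icc x₀ x, |deriv (deriv f) t| ≤ M) :
    |f x - f x₀ - deriv f x₀ * (x - x₀)| ≤ M * (x - x₀) ^ 2 / 2 := by
  have hu := uniqueDiffOn_Icc hx
  have hdf : Differentiable ℝ f := hf.differentiable (by norm_num)
  have hdf' : Differentiable ℝ (deriv f) := ((contDiff_succ_iff_deriv.mp (show ContDiff ℝ (1+1) f from hf)).2.2.differentiable one_ne_zero)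
  have hco : ContDiffOn ℝ 1 f (Icc x₀ x) := (hf.of_le one_le_two).contDiffOn
  have hone : ∀ y ∈ Icc x₀ x, iteratedDerivWithin 1 f (Icc x₀ x) y = deriv f y := by
    intro y hy
    rw [iteratedDerivWithin_one]
    exact (hdf y).derivWithin (hu y hy)
  have hdiff : DifferentiableOn ℝ (iteratedDerivWithin 1 f (Icc x₀ x)) (Ioo x₀ x) := by
    apply DifferentiableOn.congr (f := deriv f) (hdf'.differentiableOn)
    intro y hy; exact hone y (Ioo_subset_Icc_self hy)
  obtain ⟨x', hx', heq⟩ := taylor_mean_remainder_lagrange (n := 1) hx.ne (by rwa [uIcc_of_le hx.le])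
    (by rwa [uIcc_of_le hx.le, uIoo_of_le hx.le])
  rw [uIcc_of_le hx.le] at heq; rw [uIoo_of_le hx.le] at hx'
  have h2 : iteratedDerivWithin 2 f (Icc x₀ x) x' = deriv (deriv f) x' := by
    have : (2 : ℕ) = 1 + 1 := rfl
    rw [this, iteratedDerivWithin_succ]
    rw [derivWithin_congr hone (hone x' (Ioo_subset_Icc_self hx'))]
    exact (hdf' x').derivWithin (hu x' (Ioo_subset_Icc_self hx'))
  have htay : taylorWithinEval f 1 (Icc x₀ x) x₀ x = f x₀ + deriv f x₀ * (x - x₀) := by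
    rw [taylorWithinEval_succ, taylor_within_zero_eval]
    rw [hone x₀ (left_mem_Icc.mpr hx.le)]
    simp [smul_eq_mul]
    ring
  rw [htay] at heq
  have : f x - f x₀ - deriv f x₀ * (x - x₀) = deriv (deriv f) x' * (x - x₀) ^ 2 / 2 := by
    rw [← h2]; rw [show f x - f x₀ - deriv f x₀ * (x - x₀) = f x - (f x₀ + deriv f x₀ * (x - x₀)) by ring, heq]
    norm_num
  rw [this, abs_div, abs_mul, abs_pow, sq_abs, abs_two]
  gcongr
  exact hM x' (Ioo_subset_Icc_self hx')

lemma taylor1_left (f : ℝ → ℝ) (hf : ContDiff ℝ 2 f) {x₀ x M : ℝ} (hx : x < x₀)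
    (hM : ∀ t ∈ Icc x x₀, |deriv (deriv f) t| ≤ M) :
    |f x - f x₀ - deriv f x₀ * (x - x₀)| ≤ M * (x - x₀) ^ 2 / 2 := by
  set g : ℝ → ℝ := fun t => f (2 * x₀ - t) with hg
  have hdf : Differentiable ℝ f := hf.differentiable (by norm_num)
  have hdf' : Differentiable ℝ (deriv f) :=
    ((contDiff_succ_iff_deriv.mp (show ContDiff ℝ (1+1) f from hf)).2.2.differentiable one_ne_zero)
  have hcg : ContDiff ℝ 2 g := hf.comp (contDiff_const.sub contDiff_id)
  have hdg : ∀ t, deriv g t = -deriv f (2 * x₀ - t) := by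
    intro t
    have : HasDerivAt g (deriv f (2 * x₀ - t) * (-1)) t :=
      (hdf (2 * x₀ - t)).hasDerivAt.comp t (((hasDerivAt_id t).const_sub (2 * x₀)))
    simpa using this.deriv
  have hdg2 : ∀ t, deriv (deriv g) t = deriv (deriv f) (2 * x₀ - t) := by
    intro t
    have h1 : deriv g = fun t => -deriv f (2 * x₀ - t) := funext hdg
    rw [h1]
    have : HasDerivAt (fun t => -deriv f (2 * x₀ - t))
        (-(deriv (deriv f) (2 * x₀ - t) * (-1))) t :=
      (((hdf' (2 * x₀ - t)).hasDerivAt.comp t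
        (((hasDerivAt_id t).const_sub (2 * x₀))))).neg
    simpa using this.deriv
  have hlt : x₀ < 2 * x₀ - x := by linarith
  have hMg : ∀ t ∈ Icc x₀ (2 * x₀ - x), |deriv (deriv g) t| ≤ M := by
    intro t ht
    rw [hdg2]
    exact hM _ ⟨by simp at ht ⊢; linarith [ht.2], by simp at ht ⊢; linarith [ht.1]⟩
  have := taylor1_right g hcg hlt hMg
  have hgx : g (2 * x₀ - x) = f x := by simp [hg]
  have hgx₀ : g x₀ = f x₀ := by simp [hg]; ring_nf
  rw [hgx, hgx₀, hdg] at this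
  have e1 : (2 * x₀ - x) - x₀ = -(x - x₀) := by ring
  rw [e1] at this
  have e2 : f x - f x₀ - -deriv f (2 * x₀ - x₀) * -(x - x₀) = f x - f x₀ - deriv f x₀ * (x - x₀) := by
    norm_num; ring_nf
  calc |f x - f x₀ - deriv f x₀ * (x - x₀)|
      = |f x - f x₀ - -deriv f (2 * x₀ - x₀) * -(x - x₀)| := by rw [e2]
    _ ≤ M * (-(x - x₀)) ^ 2 / 2 := this
    _ = M * (x - x₀) ^ 2 / 2 := by ring

/-- If `F` is `C²` with `F(x₀) = 0`, `|F'(x₀)| ≥ ε₁`, `|F''| ≤ M` on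
`I = [x₀ - ε₁/M, x₀ + ε₁/M]`, and `G` is continuous with `|F - G| ≤ ε₁²/(4M)` on `I`,
then `G` has a root in `I`. -/
theorem approximating_function_has_root
    (F G : ℝ → ℝ) (hF : ContDiff ℝ 2 F) (hG : Continuous G)
    (x₀ ε₁ M : ℝ) (hε₁ : 0 < ε₁) (hM : 0 < M)
    (hFx₀ : F x₀ = 0) (hF' : ε₁ ≤ |deriv F x₀|)
    (hF'' : ∀ x ∈ Set.Icc (x₀ - ε₁ * M⁻¹) (x₀ + ε₁ * M⁻¹), |deriv (deriv F) x| ≤ M)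
    (hFG : ∀ x ∈ Set.Icc (x₀ - ε₁ * M⁻¹) (x₀ + ε₁ * M⁻¹),
      |F x - G x| ≤ (1 / 4) * ε₁ ^ 2 * M⁻¹) :
    ∃ x ∈ Set.Icc (x₀ - ε₁ * M⁻¹) (x₀ + ε₁ * M⁻¹), G x = 0 := by
  set δ : ℝ := ε₁ * M⁻¹ with hδ
  have hδ0 : 0 < δ := by positivity
  set a : ℝ := x₀ - δ with ha
  set b : ℝ := x₀ + δ with hb
  have hab : a ≤ b := by simp [ha, hb]; linarith
  have haI : a ∈ Icc a b := left_mem_Icc.mpr hab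
  have hbI : b ∈ Icc a b := right_mem_Icc.mpr hab
  -- Taylor bounds
  have hbnd : M * δ ^ 2 / 2 = ε₁ ^ 2 * M⁻¹ / 2 := by
    field_simp [hδ]; rw [hδ, mul_pow, inv_pow]; field_simp
  have hR : |F b - deriv F x₀ * δ| ≤ ε₁ ^ 2 * M⁻¹ / 2 := by
    have := taylor1_right F hF (show x₀ < b by simp [hb]; linarith)
      (fun t ht => hF'' t ⟨by linarith [ht.1, hδ0], ht.2⟩)
    rw [hFx₀] at this
    simpa [hb, hbnd] using this
  have hL : |F a + deriv F x₀ * δ| ≤ ε₁ ^ 2 * M⁻¹ / 2 := by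
    have := taylor1_left F hF (show a < x₀ by simp [ha]; linarith)
      (fun t ht => hF'' t ⟨ht.1, by linarith [ht.2, hδ0]⟩)
    rw [hFx₀] at this
    have e : a - x₀ = -δ := by ring
    rw [e] at this
    have e2 : F a - 0 - deriv F x₀ * -δ = F a + deriv F x₀ * δ := by ring
    rw [e2] at this
    calc |F a + deriv F x₀ * δ| ≤ M * (-δ) ^ 2 / 2 := this
      _ = ε₁ ^ 2 * M⁻¹ / 2 := by rw [← hbnd]; ring
  have hGa := hFG a haI
  have hGb := hFG b hbI
  have hεδ : ε₁ * δ = ε₁ ^ 2 * M⁻¹ := by rw [hδ]; ring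
  rcases le_or_gt ε₁ (deriv F x₀) with hpos | hneg
  · -- F' x₀ ≥ ε₁ : G a ≤ 0 ≤ G b
    have h1 : ε₁ ^ 2 * M⁻¹ / 4 ≤ G b := by
      have := abs_le.mp hR
      have := abs_le.mp hGb
      linarith [hεδ, mul_le_mul_of_nonneg_right hpos hδ0.le]
    have h2 : G a ≤ -(ε₁ ^ 2 * M⁻¹ / 4) := by
      have := abs_le.mp hL
      have := abs_le.mp hGa
      linarith [hεδ, mul_le_mul_of_nonneg_right hpos hδ0.le]
    have h0 : (0 : ℝ) ∈ Icc (G a) (G b) := ⟨by nlinarith, by nlinarith⟩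
    obtain ⟨x, hx, hGx⟩ := intermediate_value_Icc hab hG.continuousOn h0
    exact ⟨x, hx, hGx⟩
  · -- F' x₀ ≤ -ε₁ : G b ≤ 0 ≤ G a
    have hneg' : deriv F x₀ ≤ -ε₁ := by
      rcases abs_cases (deriv F x₀) with ⟨h, _⟩ | ⟨h, _⟩ <;> rw [h] at hF' <;> linarith
    have h1 : G b ≤ -(ε₁ ^ 2 * M⁻¹ / 4) := by
      have := abs_le.mp hR
      have := abs_le.mp hGb
      linarith [hεδ, mul_le_mul_of_nonneg_right hneg' hδ0.le]
    have h2 : ε₁ ^ 2 * M⁻¹ / 4 ≤ G a := by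
      have := abs_le.mp hL
      have := abs_le.mp hGa
      linarith [hεδ, mul_le_mul_of_nonneg_right hneg' hδ0.le]
    have h0 : (0 : ℝ) ∈ Icc (G b) (G a) := ⟨by nlinarith, by nlinarith⟩
    obtain ⟨x, hx, hGx⟩ := intermediate_value_Icc' hab hG.continuousOn h0
    exact ⟨x, hx, hGx⟩
end

section
/- Let ξ be a real random variable with E|ξ| ≤ 1, let c > 0 be such that q := P(|ξ| ≤ c) satisfies q ≤ q_1 < 1, and let R ∈ (0,1). Let ξ_0, …, ξ_n be iid copies of ξ, and for k = 0, …, n let B_k be the event { |ξ_0| ≤ c, …, |ξ_{k−1}| ≤ c, |ξ_k| > c }, and set c_{jk} := binom(j,k) R^{j−k} for j ≥ k. Then there exists a constant C'' depending only on q_1, c and R (not on n) such that ∑_{k=0}^{n} ∫_{B_k} log( ∑_{j=k}^{n} c_{jk} |ξ_j| ) dP ≤ C''. -/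
open MeasureTheory ProbabilityTheory Real

section Aux

lemma choose_mul_pow_le' {j k : ℕ} (h : k ≤ j) {x y : ℝ} (hx : 0 ≤ x) (hy : 0 ≤ y) :
    (j.choose k : ℝ) * x ^ k * y ^ (j - k) ≤ (x + y) ^ j := by
  rw [add_pow]
  have hk : k ∈ Finset.range (j+1) := Finset.mem_range.2 (Nat.lt_succ_of_le h)
  have h0 := Finset.single_le_sum (f := fun i => x ^ i * y ^ (j - i) * (j.choose i : ℝ))
    (fun i _ => by positivity) hk
  linarith [h0]

lemma coeff_le {R : ℝ} (hR0 : 0 < R) (hR1 : R < 1) {j k : ℕ} (h : k ≤ j) :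
    (j.choose k : ℝ) * R ^ (j - k) ≤ ((1+R)/(1-R)) ^ k * ((1+R)/2) ^ (j - k) := by
  have h1R : (0:ℝ) < 1 + R := by linarith
  have h1R' : (0:ℝ) < 1 - R := by linarith
  set x : ℝ := (1-R)/(1+R) with hxdef
  set y : ℝ := (2*R)/(1+R) with hydef
  have hx : 0 ≤ x := by positivity
  have hy : 0 ≤ y := by positivity
  have hxy : x + y = 1 := by
    rw [hxdef, hydef, ← add_div, div_eq_one_iff_eq h1R.ne']; ring
  have key : (j.choose k : ℝ) * x ^ k * y ^ (j-k) ≤ 1 := by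
    have := choose_mul_pow_le' h hx hy
    rwa [hxy, one_pow] at this
  have e1 : x * ((1+R)/(1-R)) = 1 := by
    rw [hxdef, div_mul_div_comm, div_eq_one_iff_eq (by positivity)]; ring
  have e2 : y * ((1+R)/2) = R := by
    rw [hydef, div_mul_div_comm, div_eq_iff (by positivity)]; ring
  have h1 : x ^ k * ((1+R)/(1-R)) ^ k = 1 := by rw [← mul_pow, e1, one_pow]
  have h2 : y ^ (j-k) * ((1+R)/2) ^ (j-k) = R ^ (j-k) := by rw [← mul_pow, e2]
  have hBpos : (0:ℝ) ≤ ((1+R)/(1-R)) ^ k * ((1+R)/2) ^ (j-k) := by positivity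
  calc (j.choose k : ℝ) * R ^ (j-k)
      = ((j.choose k : ℝ) * x ^ k * y ^ (j-k)) * (((1+R)/(1-R)) ^ k * ((1+R)/2) ^ (j-k)) := by
        rw [show ((j.choose k : ℝ) * x ^ k * y ^ (j-k)) * (((1+R)/(1-R)) ^ k * ((1+R)/2) ^ (j-k))
          = (j.choose k : ℝ) * ((x ^ k * ((1+R)/(1-R)) ^ k) * (y ^ (j-k) * ((1+R)/2) ^ (j-k)))
          from by ring, h1, h2, one_mul]
    _ ≤ 1 * (((1+R)/(1-R)) ^ k * ((1+R)/2) ^ (j-k)) := mul_le_mul_of_nonneg_right key hBpos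
    _ = _ := one_mul _

lemma geom_Icc_le {R' : ℝ} (h0 : 0 ≤ R') (h1 : R' < 1) (k n : ℕ) :
    ∑ j ∈ Finset.Icc k n, R' ^ (j - k) ≤ (1 - R')⁻¹ := by
  have : ∑ j ∈ Finset.Icc k n, R' ^ (j - k) = ∑ i ∈ Finset.range (n + 1 - k), R' ^ i := by
    rw [← Finset.Ico_add_one_right_eq_Icc, Finset.sum_Ico_eq_sum_range]
    exact Finset.sum_congr rfl fun i _ => by rw [Nat.add_sub_cancel_left]
  rw [this, ← tsum_geometric_of_lt_one h0 h1]
  exact Summable.sum_le_tsum _ (fun i _ => by positivity) (summable_geometric_of_lt_one h0 h1)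

lemma geom_range_le {q : ℝ} (h0 : 0 ≤ q) (h1 : q < 1) (N : ℕ) :
    ∑ k ∈ Finset.range N, q ^ k ≤ (1 - q)⁻¹ := by
  rw [← tsum_geometric_of_lt_one h0 h1]
  exact Summable.sum_le_tsum _ (fun i _ => by positivity) (summable_geometric_of_lt_one h0 h1)

lemma geom_mul_range_le {q : ℝ} (h0 : 0 ≤ q) (h1 : q < 1) (N : ℕ) :
    ∑ k ∈ Finset.range N, (k : ℝ) * q ^ k ≤ (1 - q)⁻¹ ^ 2 := by
  have hnorm : ‖q‖ < 1 := by rw [Real.norm_eq_abs, abs_of_nonneg h0]; exact h1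
  have hs := hasSum_coe_mul_geometric_of_norm_lt_one (𝕜 := ℝ) hnorm
  calc ∑ k ∈ Finset.range N, (k : ℝ) * q ^ k
      ≤ ∑' k : ℕ, (k : ℝ) * q ^ k :=
        Summable.sum_le_tsum _ (fun i _ => by positivity) hs.summable
    _ = q / (1 - q) ^ 2 := hs.tsum_eq
    _ ≤ 1 / (1 - q) ^ 2 := by gcongr
    _ = (1 - q)⁻¹ ^ 2 := by rw [one_div, inv_pow]

variable {Ω : Type} [MeasurableSpace Ω] {μ : Measure Ω}

lemma indep_indicator_abs (ξ : ℕ → Ω → ℝ) (hmeas : ∀ i, Measurable (ξ i))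
    (hindep : iIndepFun ξ μ) (c : ℝ) {k j : ℕ} (hkj : k ≤ j) :
    IndepFun ((⋂ i ∈ Finset.range k, ξ i ⁻¹' {x : ℝ | |x| ≤ c}).indicator
      (fun _ => (1:ℝ))) (fun ω => |ξ j ω|) μ := by
  classical
  have hdisj : Disjoint (Finset.range k) ({j} : Finset ℕ) := by
    simp only [Finset.disjoint_singleton_right, Finset.mem_range, not_lt]; exact hkj
  have hIF := hindep.indepFun_finset (Finset.range k) {j} hdisj hmeas
  set φ : (Finset.range k → ℝ) → ℝ :=
    ({v : Finset.range k → ℝ | ∀ i, |v i| ≤ c}).indicator (fun _ => (1:ℝ)) with hφ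
  set ψ : (({j} : Finset ℕ) → ℝ) → ℝ :=
    fun v => |v ⟨j, Finset.mem_singleton_self j⟩| with hψ
  have hsetm : MeasurableSet {v : Finset.range k → ℝ | ∀ i, |v i| ≤ c} := by
    have : {v : Finset.range k → ℝ | ∀ i, |v i| ≤ c}
        = ⋂ i, (fun v : Finset.range k → ℝ => v i) ⁻¹' {x : ℝ | |x| ≤ c} := by
      ext v; simp [Set.mem_iInter]
    rw [this]
    exact MeasurableSet.iInter fun i =>
      (measurable_pi_apply i) (measurableSet_le (continuous_abs.measurable) measurable_const)
  have hφm : Measurable φ := measurable_const.indicator hsetm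
  have hψm : Measurable ψ := (measurable_pi_apply _).abs
  have h2 := hIF.comp hφm hψm
  have e1 : (φ ∘ fun a (i : Finset.range k) => ξ i a)
      = (⋂ i ∈ Finset.range k, ξ i ⁻¹' {x : ℝ | |x| ≤ c}).indicator (fun _ => (1:ℝ)) := by
    funext ω
    simp only [Function.comp_apply, hφ, Set.indicator_apply, Set.mem_setOf_eq,
      Set.mem_iInter, Set.mem_preimage, Subtype.forall, Finset.mem_range]
  have e2 : (ψ ∘ fun a (i : ({j} : Finset ℕ)) => ξ i a) = fun ω => |ξ j ω| := rfl
  rw [e1, e2] at h2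
  exact h2

lemma setIntegral_abs_indep [IsProbabilityMeasure μ] (ξ : ℕ → Ω → ℝ)
    (hmeas : ∀ i, Measurable (ξ i))
    (hindep : iIndepFun ξ μ) (c : ℝ) {k j : ℕ} (hkj : k ≤ j) :
    ∫ ω in (⋂ i ∈ Finset.range k, ξ i ⁻¹' {x : ℝ | |x| ≤ c}), |ξ j ω| ∂μ
      = (μ (⋂ i ∈ Finset.range k, ξ i ⁻¹' {x : ℝ | |x| ≤ c})).toReal * ∫ ω, |ξ j ω| ∂μ := by
  classical
  set A := ⋂ i ∈ Finset.range k, ξ i ⁻¹' {x : ℝ | |x| ≤ c} with hAdef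
  have hD : MeasurableSet {x : ℝ | |x| ≤ c} :=
    measurableSet_le (continuous_abs.measurable) measurable_const
  have hA : MeasurableSet A :=
    Set.Finite.measurableSet_biInter (Finset.finite_toSet _) (fun i _ => (hmeas i) hD)
  have hInd := indep_indicator_abs ξ hmeas hindep c hkj
  have hmul := hInd.integral_mul_eq_mul_integral
    (measurable_const.indicator hA).aestronglyMeasurable ((hmeas j).abs).aestronglyMeasurable
  have hXY : (A.indicator (fun _ => (1:ℝ)) * fun ω => |ξ j ω|)
      = A.indicator (fun ω => |ξ j ω|) := by
    funext ω
    by_cases h : ω ∈ A <;> simp [Set.indicator_of_mem, Set.indicator_of_notMem, h]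
  rw [hXY] at hmul
  rw [← integral_indicator hA, hmul]
  congr 1
  exact integral_indicator_one hA

end Aux

/-- Uniform bound on `∑_{k=0}^{n} ∫_{B_k} log(∑_{j=k}^{n} c_{jk} |ξ_j|) dP`, where
`B_k = {|ξ_0| ≤ c, …, |ξ_{k-1}| ≤ c, |ξ_k| > c}` and `c_{jk} = C(j,k) R^{j-k}`:
the bound depends only on `q₁`, `c` and `R`, not on `n`. -/
theorem sum_log_integral_bounded
    (q₁ c R : ℝ) (hc : 0 < c) (hR0 : 0 < R) (hR1 : R < 1) (hq₁ : q₁ < 1) :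
    ∃ C'' : ℝ, ∀ (n : ℕ) (ν : Measure ℝ), IsProbabilityMeasure ν →
      Integrable (fun x => |x|) ν → (∫ x, |x| ∂ν) ≤ 1 →
      (ν {x : ℝ | |x| ≤ c}).toReal ≤ q₁ →
      ∀ (Ω : Type) (_ : MeasurableSpace Ω) (μ : Measure Ω), IsProbabilityMeasure μ →
      ∀ ξ : ℕ → Ω → ℝ, (∀ i, Measurable (ξ i)) →
        iIndepFun ξ μ →
        (∀ i, μ.map (ξ i) = ν) →
        (∑ k ∈ Finset.range (n + 1),
            ∫ ω in {ω | (∀ j < k, |ξ j ω| ≤ c) ∧ c < |ξ k ω|},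
              Real.log (∑ j ∈ Finset.Icc k n,
                (j.choose k : ℝ) * R ^ (j - k) * |ξ j ω|) ∂μ)
          ≤ C'' := by
  classical
  have h1R : (0:ℝ) < 1 + R := by linarith
  have h1R' : (0:ℝ) < 1 - R := by linarith
  set q₀ : ℝ := max q₁ 0 with hq₀def
  have hq₀0 : (0:ℝ) ≤ q₀ := le_max_right _ _
  have hq₀1 : q₀ < 1 := max_lt hq₁ one_pos
  set B : ℝ := (1+R)/(1-R) with hBdef
  set D : ℝ := 2/(1-R) with hDdef
  have hB1 : (1:ℝ) ≤ B := by rw [hBdef, le_div_iff₀ h1R']; linarith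
  have hD1 : (1:ℝ) ≤ D := by rw [hDdef, le_div_iff₀ h1R']; linarith
  have hB0 : (0:ℝ) < B := lt_of_lt_of_le one_pos hB1
  have hD0 : (0:ℝ) < D := lt_of_lt_of_le one_pos hD1
  have hlogB : 0 ≤ Real.log B := Real.log_nonneg hB1
  have hlogD : 0 ≤ Real.log D := Real.log_nonneg hD1
  refine ⟨(1-q₀)⁻¹ ^ 2 * Real.log B + (1-q₀)⁻¹ * (Real.log D + 1), ?_⟩
  intro n ν hνprob hνint hνmean hνq Ω mΩ μ hμprob ξ hξmeas hξindep hξmap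
  set Dset : Set ℝ := {x : ℝ | |x| ≤ c} with hDsetdef
  have hDm : MeasurableSet Dset :=
    measurableSet_le (continuous_abs.measurable) measurable_const
  have hq0 : (0:ℝ) ≤ (ν Dset).toReal := ENNReal.toReal_nonneg
  have hqq₀ : (ν Dset).toReal ≤ q₀ := le_trans hνq (le_max_left _ _)
  -- integrability and mean bound for |ξ j|
  have hint : ∀ j : ℕ, Integrable (fun ω => |ξ j ω|) μ := by
    intro j
    have h1 : Integrable (fun x => |x|) (μ.map (ξ j)) := by rw [hξmap j]; exact hνint
    exact (integrable_map_measure h1.aestronglyMeasurable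
      (hξmeas j).aemeasurable).mp h1
  have hmean : ∀ j : ℕ, ∫ ω, |ξ j ω| ∂μ ≤ 1 := by
    intro j
    have : ∫ ω, |ξ j ω| ∂μ = ∫ x, |x| ∂(μ.map (ξ j)) :=
      (integral_map (hξmeas j).aemeasurable
        (by rw [hξmap j]; exact hνint.aestronglyMeasurable)).symm
    rw [this, hξmap j]; exact hνmean
  -- per-k bound
  have perk : ∀ k ∈ Finset.range (n+1),
      (∫ ω in {ω | (∀ j < k, |ξ j ω| ≤ c) ∧ c < |ξ k ω|},
        Real.log (∑ j ∈ Finset.Icc k n, (j.choose k : ℝ) * R ^ (j - k) * |ξ j ω|) ∂μ)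
      ≤ q₀ ^ k * ((k : ℝ) * Real.log B + (Real.log D + 1)) := by
    intro k hkmem
    set A := ⋂ i ∈ Finset.range k, ξ i ⁻¹' Dset with hAdef
    have hA : MeasurableSet A :=
      Set.Finite.measurableSet_biInter (Finset.finite_toSet _) (fun i _ => (hξmeas i) hDm)
    have hμA : (μ A).toReal ≤ q₀ ^ k := by
      have hprod := hξindep.meas_biInter (S := Finset.range k)
        (s := fun i => ξ i ⁻¹' Dset) (fun i _ => ⟨Dset, hDm, rfl⟩)
      have heach : ∀ i : ℕ, μ (ξ i ⁻¹' Dset) = ν Dset := by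
        intro i
        rw [← hξmap i, Measure.map_apply (hξmeas i) hDm]
      have : μ A = (ν Dset) ^ k := by
        rw [hAdef, hprod]
        simp [heach, Finset.prod_const, Finset.card_range]
      rw [this, ENNReal.toReal_pow]
      exact pow_le_pow_left₀ hq0 hqq₀ k
    set Bk : Set Ω := {ω | (∀ j < k, |ξ j ω| ≤ c) ∧ c < |ξ k ω|} with hBkdef
    have hBkA : Bk ⊆ A := by
      intro ω hω
      rw [hAdef]
      simp only [Set.mem_iInter, Set.mem_preimage, Finset.mem_range]
      intro i hi
      exact hω.1 i hi
    have hBkm : MeasurableSet Bk := by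
      have : Bk = A ∩ {ω | c < |ξ k ω|} := by
        ext ω
        simp only [hBkdef, hAdef, Set.mem_setOf_eq, Set.mem_inter_iff, Set.mem_iInter,
          Set.mem_preimage, Finset.mem_range, hDsetdef]
      rw [this]
      exact hA.inter (measurableSet_lt measurable_const ((hξmeas k).abs))
    set S : Ω → ℝ := fun ω => ∑ j ∈ Finset.Icc k n, (j.choose k : ℝ) * R ^ (j - k) * |ξ j ω|
      with hSdef
    have hS0 : ∀ ω, 0 ≤ S ω := fun ω => Finset.sum_nonneg fun j _ => by positivity
    have hSint : Integrable S μ :=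
      integrable_finset_sum _ (fun j _ => ((hint j).const_mul _))
    set K : ℝ := B ^ k * D with hKdef
    have hK1 : (1:ℝ) ≤ K := by
      calc (1:ℝ) = 1 * 1 := (one_mul 1).symm
        _ ≤ B ^ k * D := mul_le_mul (one_le_pow₀ hB1) hD1 zero_le_one (by positivity)
    have hK0 : (0:ℝ) < K := lt_of_lt_of_le one_pos hK1
    have hlogK0 : 0 ≤ Real.log K := Real.log_nonneg hK1
    have hlogK : Real.log K = (k : ℝ) * Real.log B + Real.log D := by
      rw [hKdef, Real.log_mul (by positivity) (by positivity), Real.log_pow]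
    -- pointwise bound
    have hpt : ∀ ω, Real.log (S ω) ≤ Real.log K + S ω / K := by
      intro ω
      rcases eq_or_lt_of_le (hS0 ω) with h | h
      · rw [← h, Real.log_zero, zero_div]
        linarith
      · have h1 : Real.log (S ω / K) ≤ S ω / K - 1 :=
          Real.log_le_sub_one_of_pos (by positivity)
        rw [Real.log_div h.ne' hK0.ne'] at h1
        linarith
    have hRHSint : Integrable (fun ω => Real.log K + S ω / K) μ :=
      (integrable_const _).add (hSint.div_const K)
    -- coefficients sum bound
    have hcoef : ∑ j ∈ Finset.Icc k n, (j.choose k : ℝ) * R ^ (j - k) ≤ K := by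
      calc ∑ j ∈ Finset.Icc k n, (j.choose k : ℝ) * R ^ (j - k)
          ≤ ∑ j ∈ Finset.Icc k n, B ^ k * ((1+R)/2) ^ (j - k) := by
            refine Finset.sum_le_sum fun j hj => ?_
            exact coeff_le hR0 hR1 (Finset.mem_Icc.1 hj).1
        _ = B ^ k * ∑ j ∈ Finset.Icc k n, ((1+R)/2) ^ (j - k) := by
            rw [Finset.mul_sum]
        _ ≤ B ^ k * (1 - (1+R)/2)⁻¹ := by
            refine mul_le_mul_of_nonneg_left ?_ (by positivity)
            exact geom_Icc_le (by linarith) (by linarith) k n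
        _ = K := by
            rw [hKdef]
            congr 1
            rw [hDdef, show (1:ℝ) - (1+R)/2 = (1-R)/2 by ring, inv_div]
    -- set-integral of |ξ j| over A
    have hAint : ∀ j ∈ Finset.Icc k n, ∫ ω in A, |ξ j ω| ∂μ ≤ q₀ ^ k := by
      intro j hj
      have hkj : k ≤ j := (Finset.mem_Icc.1 hj).1
      have := setIntegral_abs_indep (μ := μ) ξ hξmeas hξindep c hkj
      rw [hAdef, hDsetdef]
      rw [this]
      calc (μ (⋂ i ∈ Finset.range k, ξ i ⁻¹' {x : ℝ | |x| ≤ c})).toReal * ∫ ω, |ξ j ω| ∂μ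
          ≤ q₀ ^ k * 1 := by
            refine mul_le_mul ?_ (hmean j) (integral_nonneg fun ω => abs_nonneg _)
              (by positivity)
            rw [← hDsetdef, ← hAdef]; exact hμA
        _ = q₀ ^ k := mul_one _
    -- main chain
    calc ∫ ω in Bk, Real.log (S ω) ∂μ
        ≤ ∫ ω in Bk, (Real.log K + S ω / K) ∂μ := by
          by_cases hI : IntegrableOn (fun ω => Real.log (S ω)) Bk μ
          · exact setIntegral_mono_on hI hRHSint.integrableOn hBkm fun ω _ => hpt ω
          · rw [integral_undef hI]
            refine setIntegral_nonneg hBkm fun ω _ => ?_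
            have := hS0 ω
            have : 0 ≤ S ω / K := by positivity
            linarith
      _ ≤ ∫ ω in A, (Real.log K + S ω / K) ∂μ := by
          refine setIntegral_mono_set hRHSint.integrableOn
            (Filter.Eventually.of_forall fun ω => ?_)
            (HasSubset.Subset.eventuallyLE hBkA)
          show (0:ℝ) ≤ Real.log K + S ω / K
          have h1 := hS0 ω
          have h2 : 0 ≤ S ω / K := by positivity
          linarith
      _ = (μ A).toReal * Real.log K + (∫ ω in A, S ω ∂μ) / K := by
          rw [integral_add (show IntegrableOn (fun _ => Real.log K) A μ from integrableOn_const)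
            (hSint.div_const K).integrableOn]
          rw [setIntegral_const, integral_div, smul_eq_mul, Measure.real]
      _ ≤ q₀ ^ k * Real.log K + (q₀ ^ k * K) / K := by
          refine add_le_add (mul_le_mul_of_nonneg_right hμA hlogK0) ?_
          have hAS : ∫ ω in A, S ω ∂μ ≤ q₀ ^ k * K := by
            have heq : ∫ ω in A, S ω ∂μ
                = ∑ j ∈ Finset.Icc k n, (j.choose k : ℝ) * R ^ (j - k) * ∫ ω in A, |ξ j ω| ∂μ := by
              simp only [hSdef]
              rw [integral_finset_sum _ (fun j _ => ((hint j).const_mul _).integrableOn)]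
              exact Finset.sum_congr rfl fun j _ => integral_const_mul _ _
            rw [heq]
            calc ∑ j ∈ Finset.Icc k n, (j.choose k : ℝ) * R ^ (j - k) * ∫ ω in A, |ξ j ω| ∂μ
                ≤ ∑ j ∈ Finset.Icc k n, (j.choose k : ℝ) * R ^ (j - k) * q₀ ^ k := by
                  refine Finset.sum_le_sum fun j hj => ?_
                  exact mul_le_mul_of_nonneg_left (hAint j hj) (by positivity)
              _ = (∑ j ∈ Finset.Icc k n, (j.choose k : ℝ) * R ^ (j - k)) * q₀ ^ k := by
                  rw [Finset.sum_mul]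
              _ ≤ K * q₀ ^ k := mul_le_mul_of_nonneg_right hcoef (by positivity)
              _ = q₀ ^ k * K := mul_comm _ _
          gcongr
      _ ≤ q₀ ^ k * ((k : ℝ) * Real.log B + (Real.log D + 1)) := by
          rw [mul_div_assoc, div_self hK0.ne', mul_one, hlogK]
          ring_nf
          linarith
  -- sum the per-k bounds
  refine le_trans (Finset.sum_le_sum perk) ?_
  have hsplit : ∀ k : ℕ, q₀ ^ k * ((k : ℝ) * Real.log B + (Real.log D + 1))
      = (k : ℝ) * q₀ ^ k * Real.log B + q₀ ^ k * (Real.log D + 1) := fun k => by ring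
  rw [Finset.sum_congr rfl (fun k _ => hsplit k), Finset.sum_add_distrib,
    ← Finset.sum_mul, ← Finset.sum_mul]
  refine add_le_add ?_ ?_
  · exact mul_le_mul_of_nonneg_right (geom_mul_range_le hq₀0 hq₀1 (n+1)) hlogB
  · exact mul_le_mul_of_nonneg_right (geom_range_le hq₀0 hq₀1 (n+1)) (by linarith)
end
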